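/- Let p be an odd prime, let (a_m)_{m=0,…,p} be the complete set of p+1 MUBs of ℂ^p consisting of the p Fourier–Gauss bases (m = 0,…,p−1) and the standard basis (m = p), and let W = diag(α_p^{s²}). Suppose U is a unitary on EuclideanSpace ℂ (Fin p × Fin p) commuting with W ⊗ I and with I ⊗ W, and such that |⟨a_m^x ⊗ a_m^y, U^n (a_0^{x'} ⊗ a_n^{y'})⟩|² = 1/p² for all x, y, x', y' ∈ Fin p, all n ∈ {1,…,p−1}, and all m ∈ {0,…,p}. Then the p² bases { U^ν (a_μ^x ⊗ a_{μ+ν}^y) : x, y ∈ Fin p } for μ, ν ∈ ℤ/pℤ, together with the standard basis of EuclideanSpace ℂ (Fin p × Fin p), form a complete set of p²+1 pairwise mutually unbiased bases. -/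

import Mathlib

/-- `α_p = exp(2πi/p)`, the `p`-th root of unity. -/
noncomputable def rootOfUnity (p : ℕ) : ℂ := Complex.exp (2 * Real.pi * Complex.I / p)

/-- The Fourier–Gauss vector `|j_m⟩` with components `p^{-1/2}·α_p^{js + ms²}`. -/
noncomputable def fourierGauss (p : ℕ) (j m : ℕ) : EuclideanSpace ℂ (Fin p) :=
  WithLp.toLp 2 (fun s : Fin p => (Real.sqrt p : ℂ)⁻¹ * rootOfUnity p ^ (j * (s : ℕ) + m * (s : ℕ) ^ 2))

/-- The complete set `(a_m)_{m=0,…,p}` of MUBs of `ℂ^p`: the `p` Fourier–Gauss bases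
(`m < p`) and the standard basis (`m = p`). -/
noncomputable def mubQupit (p : ℕ) (m : Fin (p + 1)) (x : Fin p) : EuclideanSpace ℂ (Fin p) :=
  if (m : ℕ) < p then fourierGauss p (x : ℕ) (m : ℕ) else EuclideanSpace.single x 1

/-- The product vector `(u ⊗ v)(a,b) = u(a)·v(b)`. -/
noncomputable def tens {p : ℕ} (u v : EuclideanSpace ℂ (Fin p)) :
    EuclideanSpace ℂ (Fin p × Fin p) :=
  WithLp.toLp 2 (fun ab : Fin p × Fin p => u ab.1 * v ab.2)

/-- The action of `W ⊗ I` on `ℂ^p ⊗ ℂ^p`, where `W = diag(α_p^{s²})`. -/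
noncomputable def WtensorI (p : ℕ) (ψ : EuclideanSpace ℂ (Fin p × Fin p)) :
    EuclideanSpace ℂ (Fin p × Fin p) :=
  WithLp.toLp 2 (fun st : Fin p × Fin p => rootOfUnity p ^ ((st.1 : ℕ) ^ 2) * ψ st)

/-- The action of `I ⊗ W` on `ℂ^p ⊗ ℂ^p`, where `W = diag(α_p^{s²})`. -/
noncomputable def ItensorW (p : ℕ) (ψ : EuclideanSpace ℂ (Fin p × Fin p)) :
    EuclideanSpace ℂ (Fin p × Fin p) :=
  WithLp.toLp 2 (fun st : Fin p × Fin p => rootOfUnity p ^ ((st.2 : ℕ) ^ 2) * ψ st)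

/-- The candidate basis vectors `U^ν (a_μ^x ⊗ a_{μ+ν}^y)`, with subscripts mod `p`. -/
noncomputable def genVec (p : ℕ)
    (U : EuclideanSpace ℂ (Fin p × Fin p) ≃ₗᵢ[ℂ] EuclideanSpace ℂ (Fin p × Fin p))
    (μ ν : ZMod p) (x y : Fin p) : EuclideanSpace ℂ (Fin p × Fin p) :=
  (U ^ ν.val) (tens (fourierGauss p (x : ℕ) μ.val) (fourierGauss p (y : ℕ) (μ.val + ν.val)))

section
variable {p : ℕ} [NeZero p]

theorem hroot : IsPrimitiveRoot (rootOfUnity p) p :=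
  Complex.isPrimitiveRoot_exp p (NeZero.ne p)

theorem zeta_pow_mod (n : ℕ) : rootOfUnity p ^ n = rootOfUnity p ^ (n % p) := by
  conv_lhs => rw [← Nat.div_add_mod n p]
  rw [pow_add, pow_mul, hroot.pow_eq_one, one_pow, one_mul]

noncomputable def ee (p : ℕ) (k : ZMod p) : ℂ := rootOfUnity p ^ k.val

theorem ee_natCast (n : ℕ) : ee p (n : ZMod p) = rootOfUnity p ^ n := by
  rw [ee, ZMod.val_natCast, ← zeta_pow_mod]

theorem ee_zero : ee p 0 = 1 := by simp [ee, ZMod.val_zero]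

theorem ee_add (a b : ZMod p) : ee p (a + b) = ee p a * ee p b := by
  rw [ee, ZMod.val_add, ← zeta_pow_mod, pow_add]; rfl

theorem abs_ee (k : ZMod p) : ‖ee p k‖ = 1 := by
  rw [ee, norm_pow, rootOfUnity, Complex.norm_exp]
  have : (2 * Real.pi * Complex.I / p).re = 0 := by simp [Complex.div_re]
  rw [this, Real.exp_zero, one_pow]

theorem ee_ne_zero (k : ZMod p) : ee p k ≠ 0 := by
  intro h; have := abs_ee k; rw [h] at this; simp at this

theorem ee_conj (k : ZMod p) : (starRingEnd ℂ) (ee p k) = ee p (-k) := by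
  have h1 : ee p (-k) * ee p k = 1 := by rw [← ee_add, neg_add_cancel, ee_zero]
  have h2 : (starRingEnd ℂ) (ee p k) * ee p k = 1 := by
    rw [← Complex.normSq_eq_conj_mul_self, ← Complex.sq_norm, abs_ee]; norm_num
  exact mul_right_cancel₀ (ee_ne_zero k) (h2.trans h1.symm)

theorem ee_eq_one_iff (k : ZMod p) : ee p k = 1 ↔ k = 0 := by
  rw [ee, hroot.pow_eq_one_iff_dvd, Nat.dvd_iff_mod_eq_zero,
    Nat.mod_eq_of_lt (ZMod.val_lt k), ZMod.val_eq_zero]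

theorem ee_nsmul (n : ℕ) (k : ZMod p) : ee p (n • k) = ee p k ^ n := by
  induction n with
  | zero => simpa using ee_zero
  | succ m ih => rw [succ_nsmul, ee_add, ih, pow_succ]

theorem sum_ee (k : ZMod p) :
    ∑ s : ZMod p, ee p (k * s) = if k = 0 then (p : ℂ) else 0 := by
  by_cases hk : k = 0
  · simp [hk, ee_zero, ZMod.card]
  · rw [if_neg hk]
    have hterm : ∀ s : ZMod p, ee p (k * s) = ee p k ^ s.val := by
      intro s
      rw [← ee_nsmul, nsmul_eq_mul, mul_comm k s]
      congr 1
      rw [ZMod.natCast_val, ZMod.cast_id]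
    simp_rw [hterm]
    have hbij : Function.Bijective (fun s : ZMod p => (⟨s.val, ZMod.val_lt s⟩ : Fin p)) := by
      rw [Fintype.bijective_iff_injective_and_card]
      constructor
      · intro a b hab
        exact ZMod.val_injective p (by simpa using congrArg Fin.val hab)
      · simp [ZMod.card]
    have := Fintype.sum_bijective _ hbij (fun s : ZMod p => ee p k ^ s.val)
      (fun i : Fin p => ee p k ^ (i : ℕ)) (fun s => rfl)
    rw [this, Fin.sum_univ_eq_sum_range, geom_sum_eq]
    · have hp1 : ee p k ^ p = 1 := by
        rw [ee, ← pow_mul, mul_comm, pow_mul, hroot.pow_eq_one, one_pow]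
      rw [hp1, sub_self, zero_div]
    · rw [Ne, ee_eq_one_iff]; exact hk

theorem sum_fin_eq_sum_zmod (g : ZMod p → ℂ) :
    ∑ i : Fin p, g ((i : ℕ) : ZMod p) = ∑ s : ZMod p, g s := by
  apply Fintype.sum_bijective (fun i : Fin p => ((i : ℕ) : ZMod p))
  · rw [Fintype.bijective_iff_injective_and_card]
    refine ⟨fun a b hab => ?_, by simp [ZMod.card]⟩
    have := congrArg ZMod.val hab
    rw [ZMod.val_natCast, ZMod.val_natCast, Nat.mod_eq_of_lt a.isLt,
      Nat.mod_eq_of_lt b.isLt] at this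
    exact Fin.val_injective this
  · intro i; rfl


theorem twoNeZeroZMod (hp : p.Prime) (hodd : Odd p) : (2 : ZMod p) ≠ 0 := by
  have : ((2 : ℕ) : ZMod p) ≠ 0 := by
    rw [Ne, ZMod.natCast_eq_zero_iff]
    intro h
    rcases (Nat.prime_dvd_prime_iff_eq hp Nat.prime_two).mp h with rfl
    exact (Nat.not_odd_iff_even.mpr even_two) hodd
  simpa using this

theorem gauss_conj_mul (hp : p.Prime) (hodd : Odd p) (c d : ZMod p) (hd : d ≠ 0) :
    (starRingEnd ℂ) (∑ s : ZMod p, ee p (c * s + d * s ^ 2)) *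
      (∑ s : ZMod p, ee p (c * s + d * s ^ 2)) = (p : ℂ) := by
  haveI : Fact p.Prime := ⟨hp⟩
  rw [map_sum]
  simp_rw [ee_conj]
  rw [Finset.sum_mul_sum]
  have hre : ∀ t : ZMod p, ∑ s : ZMod p, ee p (-(c * t + d * t ^ 2)) * ee p (c * s + d * s ^ 2)
      = ∑ u : ZMod p, ee p (c * u + d * u ^ 2) * ee p (2 * d * t * u) := by
    intro t
    rw [← Equiv.sum_comp (Equiv.addLeft t) (fun s => ee p (-(c * t + d * t ^ 2)) * ee p (c * s + d * s ^ 2))]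
    refine Finset.sum_congr rfl fun u _ => ?_
    show ee p (-(c * t + d * t ^ 2)) * ee p (c * (t + u) + d * (t + u) ^ 2)
        = ee p (c * u + d * u ^ 2) * ee p (2 * d * t * u)
    rw [← ee_add, ← ee_add]
    congr 1
    ring
  simp_rw [hre]
  rw [Finset.sum_comm]
  have hcol : ∀ u : ZMod p, ∑ t : ZMod p, ee p (c * u + d * u ^ 2) * ee p (2 * d * t * u)
      = if u = 0 then (p : ℂ) else 0 := by
    intro u
    rw [← Finset.mul_sum]
    have : ∀ t : ZMod p, ee p (2 * d * t * u) = ee p ((2 * d * u) * t) := by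
      intro t; congr 1; ring
    simp_rw [this, sum_ee]
    by_cases hu : u = 0
    · simp [hu, ee_zero]
    · rw [if_neg (by simp [mul_eq_zero, hu, hd, twoNeZeroZMod hp hodd]), mul_zero, if_neg hu]
  simp_rw [hcol]
  simp

theorem gauss_abs (hp : p.Prime) (hodd : Odd p) (c d : ZMod p) (hd : d ≠ 0) :
    ‖∑ s : ZMod p, ee p (c * s + d * s ^ 2)‖ ^ 2 = p := by
  have h := gauss_conj_mul hp hodd c d hd
  rw [← Complex.normSq_eq_conj_mul_self] at h
  have := congrArg Complex.re h
  rw [Complex.sq_norm]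
  simpa using this


noncomputable def FGz (p : ℕ) (c d : ZMod p) : EuclideanSpace ℂ (Fin p) :=
  WithLp.toLp 2 (fun s : Fin p => (Real.sqrt p : ℂ)⁻¹ * ee p (c * ((s : ℕ) : ZMod p) + d * ((s : ℕ) : ZMod p) ^ 2))

theorem fourierGauss_eq (x m : ℕ) :
    fourierGauss p x m = FGz p (x : ZMod p) (m : ZMod p) := by
  ext s
  show (Real.sqrt p : ℂ)⁻¹ * rootOfUnity p ^ (x * (s : ℕ) + m * (s : ℕ) ^ 2) = _
  show _ = (Real.sqrt p : ℂ)⁻¹ * ee p _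
  congr 1
  rw [← ee_natCast]
  congr 1
  push_cast
  ring

theorem sqrtp_inv_mul (hp : p ≠ 0) :
    ((Real.sqrt p : ℂ))⁻¹ * ((Real.sqrt p : ℂ))⁻¹ = ((p : ℝ) : ℂ)⁻¹ := by
  rw [← mul_inv, ← Complex.ofReal_mul, Real.mul_self_sqrt (Nat.cast_nonneg p)]

theorem inner_FGz (c d c' d' : ZMod p) :
    (inner ℂ (FGz p c d) (FGz p c' d') : ℂ)
      = ((p : ℝ) : ℂ)⁻¹ * ∑ s : ZMod p, ee p ((c' - c) * s + (d' - d) * s ^ 2) := by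
  rw [PiLp.inner_apply]
  rw [← sum_fin_eq_sum_zmod (fun s => ee p ((c' - c) * s + (d' - d) * s ^ 2)), Finset.mul_sum]
  refine Finset.sum_congr rfl fun s _ => ?_
  show ((Real.sqrt p : ℂ)⁻¹ * ee p (c' * ((s:ℕ):ZMod p) + d' * ((s:ℕ):ZMod p) ^ 2)) *
      (starRingEnd ℂ) ((Real.sqrt p : ℂ)⁻¹ * ee p (c * ((s:ℕ):ZMod p) + d * ((s:ℕ):ZMod p) ^ 2)) = _
  rw [map_mul, ee_conj, map_inv₀, Complex.conj_ofReal,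
    mul_mul_mul_comm, sqrtp_inv_mul (NeZero.ne p), ← ee_add]
  congr 1
  ring


theorem abs_inner_FGz (hp : p.Prime) (hodd : Odd p) (c c' : ZMod p) {d d' : ZMod p}
    (hdd : d ≠ d') :
    ‖(inner ℂ (FGz p c d) (FGz p c' d') : ℂ)‖ ^ 2 = 1 / p := by
  rw [inner_FGz, norm_mul, mul_pow, norm_inv, Complex.norm_real, Real.norm_eq_abs,
    abs_of_nonneg (Nat.cast_nonneg p), gauss_abs hp hodd _ _ (sub_ne_zero.mpr (Ne.symm hdd))]
  have hp0 : (p : ℝ) ≠ 0 := Nat.cast_ne_zero.mpr (NeZero.ne p)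
  field_simp

theorem inner_tens (u v u' v' : EuclideanSpace ℂ (Fin p)) :
    (inner ℂ (tens u v) (tens u' v') : ℂ) = (inner ℂ u u' : ℂ) * (inner ℂ v v' : ℂ) := by
  rw [PiLp.inner_apply, PiLp.inner_apply, PiLp.inner_apply, Finset.sum_mul_sum]
  rw [← Finset.sum_product']
  rw [show ((Finset.univ : Finset (Fin p)) ×ˢ (Finset.univ : Finset (Fin p)))
      = (Finset.univ : Finset (Fin p × Fin p)) from rfl]
  refine Finset.sum_congr rfl fun ab _ => ?_
  show (u' ab.1 * v' ab.2) * (starRingEnd ℂ) (u ab.1 * v ab.2) = _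
  rw [map_mul, RCLike.inner_apply, RCLike.inner_apply]
  ring

/-- diagonal phase operator -/
noncomputable def Dop (p : ℕ) (a b : ZMod p) (ψ : EuclideanSpace ℂ (Fin p × Fin p)) :
    EuclideanSpace ℂ (Fin p × Fin p) :=
  WithLp.toLp 2 (fun st : Fin p × Fin p => ee p (a * ((st.1 : ℕ) : ZMod p) ^ 2 + b * ((st.2 : ℕ) : ZMod p) ^ 2) * ψ st)

theorem inner_Dop_left (a b : ZMod p) (φ χ : EuclideanSpace ℂ (Fin p × Fin p)) :
    (inner ℂ (Dop p a b φ) χ : ℂ) = inner ℂ φ (Dop p (-a) (-b) χ) := by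
  rw [PiLp.inner_apply, PiLp.inner_apply]
  refine Finset.sum_congr rfl fun st _ => ?_
  show χ st * (starRingEnd ℂ) (ee p _ * φ st) = (ee p _ * χ st) * (starRingEnd ℂ) (φ st)
  rw [map_mul, ee_conj]
  rw [show -(a * ((st.1 : ℕ) : ZMod p) ^ 2 + b * ((st.2 : ℕ) : ZMod p) ^ 2)
      = -a * ((st.1 : ℕ) : ZMod p) ^ 2 + -b * ((st.2 : ℕ) : ZMod p) ^ 2 by ring]
  ring

theorem Dop_tens_FGz (a b c d c' d' : ZMod p) :
    Dop p a b (tens (FGz p c d) (FGz p c' d')) = tens (FGz p c (d + a)) (FGz p c' (d' + b)) := by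
  ext st
  show ee p _ * ((Real.sqrt p : ℂ)⁻¹ * ee p _ * ((Real.sqrt p : ℂ)⁻¹ * ee p _))
      = (Real.sqrt p : ℂ)⁻¹ * ee p _ * ((Real.sqrt p : ℂ)⁻¹ * ee p _)
  rw [show ∀ z w₁ w₂ : ℂ, ∀ k : ℂ, z * (k * w₁ * (k * w₂)) = k * k * (z * w₁ * w₂)
    from fun z w₁ w₂ k => by ring]
  rw [show ∀ w₁ w₂ : ℂ, ∀ k : ℂ, k * w₁ * (k * w₂) = k * k * (w₁ * w₂)
    from fun w₁ w₂ k => by ring]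
  rw [← ee_add, ← ee_add, ← ee_add]
  congr 1
  ring


variable (U : EuclideanSpace ℂ (Fin p × Fin p) ≃ₗᵢ[ℂ] EuclideanSpace ℂ (Fin p × Fin p))

theorem U_comm_Wk (hUW : ∀ ψ, U (WtensorI p ψ) = WtensorI p (U ψ)) (k : ℕ)
    (ψ : EuclideanSpace ℂ (Fin p × Fin p)) :
    U (WithLp.toLp 2 (fun st => rootOfUnity p ^ (k * (st.1 : ℕ) ^ 2) * ψ st))
      = WithLp.toLp 2 (fun st => rootOfUnity p ^ (k * (st.1 : ℕ) ^ 2) * U ψ st) := by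
  induction k generalizing ψ with
  | zero => simp
  | succ m ih =>
    have h1 : WithLp.toLp 2 (fun st : Fin p × Fin p => rootOfUnity p ^ ((m + 1) * (st.1 : ℕ) ^ 2) * ψ st)
        = WtensorI p (WithLp.toLp 2 (fun st => rootOfUnity p ^ (m * (st.1 : ℕ) ^ 2) * ψ st)) := by
      ext st
      show rootOfUnity p ^ ((m + 1) * (st.1 : ℕ) ^ 2) * ψ st = rootOfUnity p ^ ((st.1 : ℕ) ^ 2) * (rootOfUnity p ^ (m * (st.1 : ℕ) ^ 2) * ψ st)
      rw [← mul_assoc, ← pow_add]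
      congr 2
      ring
    rw [h1, hUW, ih]
    ext st
    show rootOfUnity p ^ ((st.1 : ℕ) ^ 2) * (rootOfUnity p ^ (m * (st.1 : ℕ) ^ 2) * U ψ st)
      = rootOfUnity p ^ ((m + 1) * (st.1 : ℕ) ^ 2) * U ψ st
    rw [← mul_assoc, ← pow_add]
    congr 2
    ring

theorem U_comm_Ik (hUW' : ∀ ψ, U (ItensorW p ψ) = ItensorW p (U ψ)) (k : ℕ)
    (ψ : EuclideanSpace ℂ (Fin p × Fin p)) :
    U (WithLp.toLp 2 (fun st => rootOfUnity p ^ (k * (st.2 : ℕ) ^ 2) * ψ st))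
      = WithLp.toLp 2 (fun st => rootOfUnity p ^ (k * (st.2 : ℕ) ^ 2) * U ψ st) := by
  induction k generalizing ψ with
  | zero => simp
  | succ m ih =>
    have h1 : WithLp.toLp 2 (fun st : Fin p × Fin p => rootOfUnity p ^ ((m + 1) * (st.2 : ℕ) ^ 2) * ψ st)
        = ItensorW p (WithLp.toLp 2 (fun st => rootOfUnity p ^ (m * (st.2 : ℕ) ^ 2) * ψ st)) := by
      ext st
      show rootOfUnity p ^ ((m + 1) * (st.2 : ℕ) ^ 2) * ψ st = rootOfUnity p ^ ((st.2 : ℕ) ^ 2) * (rootOfUnity p ^ (m * (st.2 : ℕ) ^ 2) * ψ st)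
      rw [← mul_assoc, ← pow_add]
      congr 2
      ring
    rw [h1, hUW', ih]
    ext st
    show rootOfUnity p ^ ((st.2 : ℕ) ^ 2) * (rootOfUnity p ^ (m * (st.2 : ℕ) ^ 2) * U ψ st)
      = rootOfUnity p ^ ((m + 1) * (st.2 : ℕ) ^ 2) * U ψ st
    rw [← mul_assoc, ← pow_add]
    congr 2
    ring

theorem Dop_eq_phases (a b : ZMod p) (ψ : EuclideanSpace ℂ (Fin p × Fin p)) :
    Dop p a b ψ = WithLp.toLp 2 (fun st => rootOfUnity p ^ (a.val * (st.1 : ℕ) ^ 2) *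
      (rootOfUnity p ^ (b.val * (st.2 : ℕ) ^ 2) * ψ st)) := by
  ext st
  show ee p _ * ψ st = rootOfUnity p ^ (a.val * (st.1 : ℕ) ^ 2) *
      (rootOfUnity p ^ (b.val * (st.2 : ℕ) ^ 2) * ψ st)
  rw [← mul_assoc]
  congr 1
  rw [← ee_natCast (p := p) (a.val * (st.1 : ℕ) ^ 2), ← ee_natCast (p := p) (b.val * (st.2 : ℕ) ^ 2),
    ← ee_add]
  congr 1
  push_cast [ZMod.natCast_val, ZMod.cast_id]
  ring

theorem U_comm_Dop (hUW : ∀ ψ, U (WtensorI p ψ) = WtensorI p (U ψ))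
    (hUW' : ∀ ψ, U (ItensorW p ψ) = ItensorW p (U ψ)) (a b : ZMod p)
    (ψ : EuclideanSpace ℂ (Fin p × Fin p)) :
    U (Dop p a b ψ) = Dop p a b (U ψ) := by
  rw [Dop_eq_phases, Dop_eq_phases]
  have h1 : WithLp.toLp 2 (fun st : Fin p × Fin p => rootOfUnity p ^ (a.val * (st.1 : ℕ) ^ 2) *
      (rootOfUnity p ^ (b.val * (st.2 : ℕ) ^ 2) * ψ st))
      = WithLp.toLp 2 (fun st => rootOfUnity p ^ (a.val * (st.1 : ℕ) ^ 2) *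
        ((WithLp.toLp 2 (fun st' : Fin p × Fin p => rootOfUnity p ^ (b.val * (st'.2 : ℕ) ^ 2) * ψ st') :
          EuclideanSpace ℂ (Fin p × Fin p)) st)) := rfl
  rw [h1, U_comm_Wk U hUW, U_comm_Ik U hUW']

theorem Upow_comm_Dop (hUW : ∀ ψ, U (WtensorI p ψ) = WtensorI p (U ψ))
    (hUW' : ∀ ψ, U (ItensorW p ψ) = ItensorW p (U ψ)) (n : ℕ) (a b : ZMod p)
    (ψ : EuclideanSpace ℂ (Fin p × Fin p)) :
    (U ^ n) (Dop p a b ψ) = Dop p a b ((U ^ n) ψ) := by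
  induction n with
  | zero => rfl
  | succ m ih =>
    have h : ∀ χ, (U ^ (m + 1)) χ = U ((U ^ m) χ) := by
      intro χ; rw [pow_succ']; rfl
    rw [h, h, ih, U_comm_Dop U hUW hUW']


theorem genVec_FGz (μ ν : ZMod p) (x y : Fin p) :
    genVec p U μ ν x y
      = (U ^ ν.val) (tens (FGz p ((x : ℕ) : ZMod p) μ) (FGz p ((y : ℕ) : ZMod p) (μ + ν))) := by
  have h1 : ((μ.val : ℕ) : ZMod p) = μ := by rw [ZMod.natCast_val, ZMod.cast_id]
  have h2 : ((μ.val + ν.val : ℕ) : ZMod p) = μ + ν := by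
    push_cast [ZMod.natCast_val, ZMod.cast_id]
    ring
  rw [genVec, fourierGauss_eq, fourierGauss_eq, h1, h2]

theorem tens_single (a b : Fin p) :
    tens (EuclideanSpace.single a (1 : ℂ)) (EuclideanSpace.single b (1 : ℂ))
      = EuclideanSpace.single ((a, b) : Fin p × Fin p) (1 : ℂ) := by
  ext st
  show EuclideanSpace.single a (1:ℂ) st.1 * EuclideanSpace.single b (1:ℂ) st.2 = _
  rw [EuclideanSpace.single_apply, EuclideanSpace.single_apply, EuclideanSpace.single_apply]
  by_cases h1 : st.1 = a <;> by_cases h2 : st.2 = b <;>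
    simp [h1, h2, Prod.ext_iff]

theorem key_cross (hp : p.Prime) (hodd : Odd p)
    (hUW : ∀ ψ, U (WtensorI p ψ) = WtensorI p (U ψ))
    (hUW' : ∀ ψ, U (ItensorW p ψ) = ItensorW p (U ψ))
    (hmub : ∀ n : ℕ, 1 ≤ n → n ≤ p - 1 →
      ∀ (m : Fin (p + 1)) (x y x' y' : Fin p),
        ‖(inner ℂ (tens (mubQupit p m x) (mubQupit p m y))
            ((U ^ n) (tens (fourierGauss p (x' : ℕ) 0) (fourierGauss p (y' : ℕ) n))) : ℂ)‖ ^ 2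
          = 1 / ((p : ℝ) ^ 2))
    (μ ν μ' ν' : ZMod p) (hlt : ν.val < ν'.val) (x y x' y' : Fin p) :
    ‖(inner ℂ (genVec p U μ ν x y) (genVec p U μ' ν' x' y') : ℂ)‖ ^ 2
      = 1 / ((p : ℝ) ^ 2) := by
  set n : ℕ := ν'.val - ν.val with hn
  have hle : ν.val ≤ ν'.val := le_of_lt hlt
  have hn1 : 1 ≤ n := by omega
  have hn2 : n ≤ p - 1 := by have := ZMod.val_lt ν'; omega
  have hcast : ((n : ℕ) : ZMod p) = ν' - ν := by
    rw [hn, Nat.cast_sub hle, ZMod.natCast_val, ZMod.natCast_val, ZMod.cast_id, ZMod.cast_id]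
  rw [genVec_FGz, genVec_FGz]
  have hw : tens (FGz p ((x' : ℕ) : ZMod p) μ') (FGz p ((y' : ℕ) : ZMod p) (μ' + ν'))
      = Dop p μ' (μ' + ν) (tens (fourierGauss p (x' : ℕ) 0) (fourierGauss p (y' : ℕ) n)) := by
    rw [fourierGauss_eq, fourierGauss_eq, Nat.cast_zero, Dop_tens_FGz, zero_add, hcast,
      show ν' - ν + (μ' + ν) = μ' + ν' from by ring]
  have hsplit : ∀ χ, (U ^ ν'.val) χ = (U ^ ν.val) ((U ^ n) χ) := by
    intro χ
    rw [show ν'.val = ν.val + n from by omega, pow_add]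
    rfl
  rw [hw, hsplit, Upow_comm_Dop U hUW hUW', (U ^ ν.val).inner_map_map]
  have hD := inner_Dop_left (-μ') (-(μ' + ν))
    (tens (FGz p ((x : ℕ) : ZMod p) μ) (FGz p ((y : ℕ) : ZMod p) (μ + ν)))
    ((U ^ n) (tens (fourierGauss p (x' : ℕ) 0) (fourierGauss p (y' : ℕ) n)))
  rw [neg_neg, neg_neg] at hD
  rw [← hD, Dop_tens_FGz,
    show μ + -μ' = μ - μ' from by ring,
    show μ + ν + -(μ' + ν) = μ - μ' from by ring]
  have hmlt : (μ - μ').val < p := ZMod.val_lt _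
  have hml : ∀ z : Fin p, FGz p ((z : ℕ) : ZMod p) (μ - μ')
      = mubQupit p ⟨(μ - μ').val, lt_trans hmlt (Nat.lt_succ_self p)⟩ z := by
    intro z
    rw [mubQupit]
    simp only [if_pos hmlt]
    rw [fourierGauss_eq, ZMod.natCast_val, ZMod.cast_id]
  rw [hml, hml]
  exact hmub n hn1 hn2 _ x y x' y'

end

/-- If a unitary `U` on `ℂ^p ⊗ ℂ^p` commutes with `W ⊗ I` and `I ⊗ W` and satisfies
`|⟨a_m^x ⊗ a_m^y, U^n (a_0^{x'} ⊗ a_n^{y'})⟩|² = 1/p²` for all `1 ≤ n ≤ p−1` and all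
`m = 0,…,p`, then the `p²` bases `{U^ν (a_μ^x ⊗ a_{μ+ν}^y)}` together with the standard
basis form a complete set of `p²+1` pairwise mutually unbiased bases. -/
theorem genVec_complete_mub (p : ℕ) (hp : p.Prime) (hodd : Odd p)
    (U : EuclideanSpace ℂ (Fin p × Fin p) ≃ₗᵢ[ℂ] EuclideanSpace ℂ (Fin p × Fin p))
    (hUW : ∀ ψ, U (WtensorI p ψ) = WtensorI p (U ψ))
    (hUW' : ∀ ψ, U (ItensorW p ψ) = ItensorW p (U ψ))
    (hmub : ∀ n : ℕ, 1 ≤ n → n ≤ p - 1 →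
      ∀ (m : Fin (p + 1)) (x y x' y' : Fin p),
        ‖(inner ℂ (tens (mubQupit p m x) (mubQupit p m y))
            ((U ^ n) (tens (fourierGauss p (x' : ℕ) 0) (fourierGauss p (y' : ℕ) n))) : ℂ)‖ ^ 2
          = 1 / ((p : ℝ) ^ 2)) :
    (∀ μ ν μ' ν' : ZMod p, (μ, ν) ≠ (μ', ν') →
      ∀ x y x' y' : Fin p,
        ‖(inner ℂ (genVec p U μ ν x y) (genVec p U μ' ν' x' y') : ℂ)‖ ^ 2
          = 1 / ((p : ℝ) ^ 2)) ∧
    (∀ (μ ν : ZMod p) (x y : Fin p) (st : Fin p × Fin p),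
      ‖(inner ℂ (EuclideanSpace.single st (1 : ℂ)) (genVec p U μ ν x y) : ℂ)‖ ^ 2
        = 1 / ((p : ℝ) ^ 2)) := by
  haveI : NeZero p := ⟨hp.ne_zero⟩
  constructor
  · intro μ ν μ' ν' hne x y x' y'
    rcases lt_trichotomy ν.val ν'.val with hlt | heq | hgt
    · exact key_cross U hp hodd hUW hUW' hmub μ ν μ' ν' hlt x y x' y'
    · have hνν' : ν = ν' := ZMod.val_injective p heq
      subst hνν'
      have hμ : μ ≠ μ' := fun h => hne (by rw [h])
      rw [genVec_FGz, genVec_FGz, (U ^ ν.val).inner_map_map, inner_tens, norm_mul, mul_pow,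
        abs_inner_FGz hp hodd _ _ hμ,
        abs_inner_FGz hp hodd _ _ (fun h => hμ (add_right_cancel h))]
      rw [div_mul_div_comm, one_mul, ← sq]
    · rw [← inner_conj_symm, Complex.norm_conj]
      exact key_cross U hp hodd hUW hUW' hmub μ' ν' μ ν hgt x' y' x y
  · intro μ ν x y st
    by_cases hν : ν = 0
    · subst hν
      rw [genVec_FGz, ZMod.val_zero, pow_zero]
      rw [LinearIsometryEquiv.coe_one, id_eq, EuclideanSpace.inner_single_left, map_one, one_mul]
      show ‖(Real.sqrt p : ℂ)⁻¹ * ee p _ * ((Real.sqrt p : ℂ)⁻¹ * ee p _)‖ ^ 2 = _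
      rw [norm_mul, norm_mul, norm_mul, abs_ee, abs_ee, norm_inv, Complex.norm_real, Real.norm_eq_abs,
        abs_of_nonneg (Real.sqrt_nonneg _)]
      rw [mul_one, ← mul_inv, Real.mul_self_sqrt (Nat.cast_nonneg p)]
      have hp0 : (p : ℝ) ≠ 0 := Nat.cast_ne_zero.mpr hp.ne_zero
      field_simp
    · set n : ℕ := ν.val with hndef
      have hn0 : ν.val ≠ 0 := fun h => hν ((ZMod.val_eq_zero ν).mp h)
      have hn1 : 1 ≤ n := by omega
      have hn2 : n ≤ p - 1 := by have := ZMod.val_lt ν; omega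
      rw [genVec_FGz]
      have hw : tens (FGz p ((x : ℕ) : ZMod p) μ) (FGz p ((y : ℕ) : ZMod p) (μ + ν))
          = Dop p μ μ (tens (fourierGauss p (x : ℕ) 0) (fourierGauss p (y : ℕ) n)) := by
        rw [fourierGauss_eq, fourierGauss_eq, Nat.cast_zero, Dop_tens_FGz, zero_add,
          show ((n : ℕ) : ZMod p) + μ = μ + ν from by
            rw [hndef, ZMod.natCast_val, ZMod.cast_id]; ring]
      rw [hw, Upow_comm_Dop U hUW hUW', EuclideanSpace.inner_single_left, map_one, one_mul]
      show ‖ee p _ *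
        ((U ^ n) (tens (fourierGauss p (x : ℕ) 0) (fourierGauss p (y : ℕ) n)) st)‖ ^ 2 = _
      rw [norm_mul, abs_ee, one_mul]
      have hkey := hmub n hn1 hn2 ⟨p, Nat.lt_succ_self p⟩ st.1 st.2 x y
      rw [show mubQupit p ⟨p, Nat.lt_succ_self p⟩ st.1 = EuclideanSpace.single st.1 1 from by
            rw [mubQupit, if_neg (lt_irrefl p)],
          show mubQupit p ⟨p, Nat.lt_succ_self p⟩ st.2 = EuclideanSpace.single st.2 1 from by
            rw [mubQupit, if_neg (lt_irrefl p)],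
          tens_single, EuclideanSpace.inner_single_left, map_one, one_mul] at hkey
      rw [show ((st.1, st.2) : Fin p × Fin p) = st from rfl] at hkey
      exact hkey
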